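/- arXiv:math/0409258 — 2 statements merged into one kernel-verified Lean document; each statement's English description precedes it below -/
import Mathlib

section
/- For any squarefree positive integer q and any integer m, ∑_{d | q} μ(d)²/φ(d)² · c_d(m) = ∏_{p | q, p | m} (1 + 1/(p-1)) · ∏_{p | q, p ∤ m} (1 - 1/(p-1)²), where c_d(m) is Ramanujan's sum. -/
open Finset ArithmeticFunction

noncomputable def rsum (m : ℤ) (d : ℕ) : ℂ :=
  ∑ a ∈ (Finset.Icc 1 d).filter (fun a => Nat.gcd a d = 1),
    Complex.exp (2 * Real.pi * Complex.I * (a : ℂ) * (m : ℂ) / (d : ℂ))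

lemma full_sum (m : ℤ) {d : ℕ} (hd : 0 < d) :
    ∑ a ∈ Finset.Icc 1 d,
      Complex.exp (2 * Real.pi * Complex.I * (a : ℂ) * (m : ℂ) / (d : ℂ)) =
    if (d : ℤ) ∣ m then (d : ℂ) else 0 := by
  have hd0 : (d : ℂ) ≠ 0 := Nat.cast_ne_zero.mpr hd.ne'
  set z : ℂ := Complex.exp (2 * Real.pi * Complex.I * (m : ℂ) / (d : ℂ)) with hz
  have hterm : ∀ a : ℕ, Complex.exp (2 * Real.pi * Complex.I * (a : ℂ) * (m : ℂ) / (d : ℂ))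
      = z ^ a := by
    intro a
    rw [hz, ← Complex.exp_nat_mul]
    ring_nf
  have hzd : z ^ d = 1 := by
    rw [hz, ← Complex.exp_nat_mul]
    have : (d : ℂ) * (2 * Real.pi * Complex.I * (m : ℂ) / (d : ℂ)) = m * (2 * Real.pi * Complex.I) := by
      field_simp
    rw [this, Complex.exp_int_mul_two_pi_mul_I]
  by_cases hdm : (d : ℤ) ∣ m
  · obtain ⟨k, rfl⟩ := hdm
    rw [if_pos ⟨k, rfl⟩]
    rw [Finset.sum_congr rfl (fun a _ => hterm a)]
    have hz1 : z = 1 := by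
      rw [hz]
      have : 2 * Real.pi * Complex.I * ((d * k : ℤ) : ℂ) / (d : ℂ) = (k : ℂ) * (2 * Real.pi * Complex.I) := by
        push_cast; field_simp
      rw [this, Complex.exp_int_mul_two_pi_mul_I]
    simp [hz1, Nat.card_Icc]
  · rw [if_neg hdm]
    have hz1 : z ≠ 1 := by
      intro h
      rw [hz, Complex.exp_eq_one_iff] at h
      obtain ⟨n, hn⟩ := h
      apply hdm
      refine ⟨n, ?_⟩
      have h2 : (2 * Real.pi * Complex.I : ℂ) ≠ 0 := by
        simp [Real.pi_ne_zero, Complex.I_ne_zero]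
      have : (m : ℂ) = (d : ℂ) * n := by
        field_simp at hn
        apply mul_left_cancel₀ h2
        rw [hn]
      exact_mod_cast this
    rw [Finset.sum_congr rfl (fun a _ => hterm a)]
    rw [← Finset.Ico_add_one_right_eq_Icc, Finset.sum_Ico_eq_sum_range]
    simp only [Nat.add_sub_cancel]
    have : ∀ i ∈ Finset.range d, z ^ (1 + i) = z * z ^ i := by
      intro i _; rw [pow_add, pow_one]
    rw [Finset.sum_congr rfl this, ← Finset.mul_sum, geom_sum_eq hz1, hzd]
    simp

lemma group_sum (m : ℤ) {d : ℕ} (hd : 0 < d) :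
    ∑ e ∈ d.divisors, rsum m e =
      ∑ b ∈ Finset.Icc 1 d,
        Complex.exp (2 * Real.pi * Complex.I * (b : ℂ) * (m : ℂ) / (d : ℂ)) := by
  unfold rsum
  rw [Finset.sum_sigma']
  refine Finset.sum_nbij' (fun x => x.2 * (d / x.1))
    (fun b => ⟨d / Nat.gcd b d, b / Nat.gcd b d⟩) ?_ ?_ ?_ ?_ ?_
  · rintro ⟨e, a⟩ hx
    simp only [Finset.mem_sigma, Nat.mem_divisors, Finset.mem_filter, Finset.mem_Icc] at hx
    obtain ⟨⟨hed, -⟩, ⟨ha1, hae⟩, hcop⟩ := hx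
    have hk : 0 < d / e := Nat.div_pos (Nat.le_of_dvd hd hed) (Nat.pos_of_dvd_of_pos hed hd)
    refine Finset.mem_Icc.mpr ⟨Nat.one_le_iff_ne_zero.mpr (by positivity), ?_⟩
    calc a * (d / e) ≤ e * (d / e) := Nat.mul_le_mul_right _ hae
    _ = d := Nat.mul_div_cancel' hed
  · intro b hb
    rw [Finset.mem_Icc] at hb
    have hb0 : 0 < b := hb.1
    have hg : 0 < Nat.gcd b d := Nat.gcd_pos_of_pos_left d hb0
    simp only [Finset.mem_sigma, Nat.mem_divisors, Finset.mem_filter, Finset.mem_Icc]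
    refine ⟨⟨Nat.div_dvd_of_dvd (Nat.gcd_dvd_right b d), hd.ne'⟩,
      ⟨Nat.one_le_div_iff hg |>.mpr (Nat.le_of_dvd hb0 (Nat.gcd_dvd_left b d)),
        Nat.div_le_div_right hb.2⟩, Nat.coprime_div_gcd_div_gcd hg⟩
  · rintro ⟨e, a⟩ hx
    simp only [Finset.mem_sigma, Nat.mem_divisors, Finset.mem_filter, Finset.mem_Icc] at hx
    obtain ⟨⟨hed, -⟩, ⟨ha1, hae⟩, hcop⟩ := hx
    obtain ⟨k, rfl⟩ := hed
    have he' : 0 < e := Nat.pos_of_ne_zero (fun h => by simp [h] at hd)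
    have hkpos : 0 < k := Nat.pos_of_ne_zero (fun h => by simp [h] at hd)
    have hdiv : e * k / e = k := Nat.mul_div_cancel_left k he'
    have hgcd : Nat.gcd (a * k) (e * k) = k := by
      rw [Nat.gcd_mul_right, hcop, one_mul]
    simp only [hdiv, hgcd]
    have h1 : e * k / k = e := Nat.mul_div_cancel e hkpos
    have h2 : a * k / k = a := Nat.mul_div_cancel a hkpos
    simp only [h1, h2]
  · intro b hb
    rw [Finset.mem_Icc] at hb
    have hg : 0 < Nat.gcd b d := Nat.gcd_pos_of_pos_left d hb.1
    simp only
    rw [Nat.div_div_self (Nat.gcd_dvd_right b d) hd.ne',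
      Nat.div_mul_cancel (Nat.gcd_dvd_left b d)]
  · rintro ⟨e, a⟩ hx
    simp only [Finset.mem_sigma, Nat.mem_divisors, Finset.mem_filter, Finset.mem_Icc] at hx
    obtain ⟨⟨hed, -⟩, ⟨ha1, hae⟩, hcop⟩ := hx
    obtain ⟨k, rfl⟩ := hed
    have he : 0 < e := Nat.pos_of_ne_zero (fun h => by simp [h] at hd)
    have hkpos : 0 < k := Nat.pos_of_ne_zero (fun h => by simp [h] at hd)
    have hdiv : e * k / e = k := Nat.mul_div_cancel_left k he
    dsimp only
    rw [hdiv]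
    have he0 : (e : ℂ) ≠ 0 := Nat.cast_ne_zero.mpr he.ne'
    have hk0 : (k : ℂ) ≠ 0 := Nat.cast_ne_zero.mpr hkpos.ne'
    congr 1
    push_cast
    field_simp

noncomputable def Rfun (m : ℤ) : ArithmeticFunction ℂ :=
  ⟨fun e => if (e : ℤ) ∣ m then (e : ℂ) else 0, by simp⟩

lemma Rfun_apply (m : ℤ) (e : ℕ) : Rfun m e = if (e : ℤ) ∣ m then (e : ℂ) else 0 := rfl

lemma Rfun_mult (m : ℤ) : (Rfun m).IsMultiplicative := by
  constructor
  · simp [Rfun_apply]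
  · intro x y hxy
    rw [Rfun_apply, Rfun_apply, Rfun_apply]
    by_cases hx : (x : ℤ) ∣ m <;> by_cases hy : (y : ℤ) ∣ m
    · rw [if_pos hx, if_pos hy, if_pos, Nat.cast_mul]
      exact (Nat.isCoprime_iff_coprime.mpr hxy).mul_dvd hx hy
    · rw [if_neg hy, mul_zero, if_neg]
      intro h; exact hy (dvd_trans (by exact_mod_cast Dvd.intro_left x rfl) h)
    · rw [if_neg hx, zero_mul, if_neg]
      intro h; exact hx (dvd_trans (by exact_mod_cast Dvd.intro y rfl) h)
    · rw [if_neg hx, zero_mul, if_neg]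
      intro h; exact hx (dvd_trans (by exact_mod_cast Dvd.intro y rfl) h)

lemma divisor_sum_rsum (m : ℤ) : ∀ n : ℕ, n > 0 → ∑ e ∈ n.divisors, rsum m e =
    (if (n : ℤ) ∣ m then (n : ℂ) else 0) := by
  intro n hn
  rw [group_sum m hn, full_sum m hn]

lemma rsum_eq_conv (m : ℤ) {n : ℕ} (hn : 0 < n) :
    rsum m n = (((ArithmeticFunction.moebius : ArithmeticFunction ℤ) :
      ArithmeticFunction ℂ) * Rfun m) n := by
  have key := (ArithmeticFunction.sum_eq_iff_sum_mul_moebius_eq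
    (f := rsum m) (g := fun n => if (n : ℤ) ∣ m then (n : ℂ) else 0)).mp
    (divisor_sum_rsum m) n hn
  rw [← key, ArithmeticFunction.mul_apply]
  apply Finset.sum_congr rfl
  intro x hx
  rw [ArithmeticFunction.intCoe_apply, Rfun_apply]

lemma rsum_mult_fn (m : ℤ) :
    (((ArithmeticFunction.moebius : ArithmeticFunction ℤ) : ArithmeticFunction ℂ) *
      Rfun m).IsMultiplicative :=
  ArithmeticFunction.isMultiplicative_moebius.intCast.mul (Rfun_mult m)

lemma rsum_one (m : ℤ) : rsum m 1 = 1 := by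
  unfold rsum
  rw [show (Finset.Icc 1 1).filter (fun a => Nat.gcd a 1 = 1) = {1} by decide]
  rw [Finset.sum_singleton]
  have : 2 * (Real.pi : ℂ) * Complex.I * ((1 : ℕ) : ℂ) * (m : ℂ) / ((1 : ℕ) : ℂ)
      = (m : ℂ) * (2 * Real.pi * Complex.I) := by push_cast; ring
  rw [this, Complex.exp_int_mul_two_pi_mul_I]

lemma rsum_prime (m : ℤ) {p : ℕ} (hp : p.Prime) :
    rsum m p = (if (p : ℤ) ∣ m then (p : ℂ) else 0) - 1 := by
  have h := divisor_sum_rsum m p hp.pos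
  rw [hp.divisors, Finset.sum_pair hp.one_lt.ne, rsum_one] at h
  linear_combination h

noncomputable def Gfun : ArithmeticFunction ℂ :=
  ⟨fun d => ((ArithmeticFunction.moebius d : ℤ) : ℂ) ^ 2 / ((Nat.totient d : ℕ) : ℂ) ^ 2,
    by simp⟩

lemma Gfun_apply (d : ℕ) :
    Gfun d = ((ArithmeticFunction.moebius d : ℤ) : ℂ) ^ 2 / ((Nat.totient d : ℕ) : ℂ) ^ 2 := rfl

lemma Gfun_mult : Gfun.IsMultiplicative := by
  constructor
  · simp [Gfun_apply]
  · intro x y hxy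
    rw [Gfun_apply, Gfun_apply, Gfun_apply,
      ArithmeticFunction.isMultiplicative_moebius.map_mul_of_coprime hxy,
      Nat.totient_mul hxy]
    push_cast
    ring

/-- For squarefree `q`:
`∑_{d ∣ q} μ(d)²/φ(d)² c_d(m) = ∏_{p∣q, p∣m} (1 + 1/(p-1)) ∏_{p∣q, p∤m} (1 - 1/(p-1)²)`,
where `c_d(m) = ∑_{(a,d)=1} e(am/d)` is the Ramanujan sum. -/
theorem stmt_11 (q : ℕ) (hq : Squarefree q) (hq0 : 0 < q) (m : ℤ) :
    ∑ d ∈ q.divisors,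
      (((ArithmeticFunction.moebius d : ℤ) : ℂ) ^ 2 / (Nat.totient d : ℂ) ^ 2) *
        ∑ a ∈ (Finset.Icc 1 d).filter (fun a => Nat.gcd a d = 1),
          Complex.exp (2 * Real.pi * Complex.I * (a : ℂ) * (m : ℂ) / (d : ℂ)) =
    (∏ p ∈ q.primeFactors.filter (fun p : ℕ => (p : ℤ) ∣ m), (1 + 1 / ((p : ℂ) - 1))) *
      ∏ p ∈ q.primeFactors.filter (fun p : ℕ => ¬ (p : ℤ) ∣ m),
        (1 - 1 / ((p : ℂ) - 1) ^ 2) := by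
  set C := (((ArithmeticFunction.moebius : ArithmeticFunction ℤ) :
      ArithmeticFunction ℂ) * Rfun m) with hCdef
  have hF : (Gfun.pmul C).IsMultiplicative := Gfun_mult.pmul (rsum_mult_fn m)
  have hLHS : ∑ d ∈ q.divisors,
      (((ArithmeticFunction.moebius d : ℤ) : ℂ) ^ 2 / (Nat.totient d : ℂ) ^ 2) *
        ∑ a ∈ (Finset.Icc 1 d).filter (fun a => Nat.gcd a d = 1),
          Complex.exp (2 * Real.pi * Complex.I * (a : ℂ) * (m : ℂ) / (d : ℂ)) =
      ∑ d ∈ q.divisors, (Gfun.pmul C) d := by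
    apply Finset.sum_congr rfl
    intro d hd
    rw [ArithmeticFunction.pmul_apply, Gfun_apply, ← rsum_eq_conv m
      (Nat.pos_of_mem_divisors hd)]
    rfl
  rw [hLHS, ← hF.prodPrimeFactors_one_add_of_squarefree hq,
    ← Finset.prod_filter_mul_prod_filter_not q.primeFactors (fun p => (p : ℤ) ∣ m)]
  have hval : ∀ p ∈ q.primeFactors, 1 + (Gfun.pmul C) p =
      if (p : ℤ) ∣ m then 1 + 1 / ((p : ℂ) - 1) else 1 - 1 / ((p : ℂ) - 1) ^ 2 := by
    intro p hp
    have hpp : p.Prime := Nat.prime_of_mem_primeFactors hp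
    have hp1 : ((p : ℂ) - 1) ≠ 0 := by
      rw [sub_ne_zero]
      exact_mod_cast hpp.one_lt.ne'
    rw [ArithmeticFunction.pmul_apply, Gfun_apply, hCdef, ← rsum_eq_conv m hpp.pos,
      rsum_prime m hpp, ArithmeticFunction.moebius_apply_prime hpp,
      Nat.totient_prime hpp, Nat.cast_sub hpp.one_le, Nat.cast_one]
    by_cases hdm : (p : ℤ) ∣ m
    · rw [if_pos hdm, if_pos hdm]
      push_cast
      field_simp
    · rw [if_neg hdm, if_neg hdm]
      push_cast
      field_simp
      ring
  rw [Finset.prod_congr rfl (fun p hp => hval p (Finset.mem_filter.mp hp).1)]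
  rw [Finset.prod_congr rfl (fun p hp => hval p (Finset.mem_filter.mp hp).1)]
  congr 1
  · apply Finset.prod_congr rfl
    intro p hp
    rw [if_pos (Finset.mem_filter.mp hp).2]
  · apply Finset.prod_congr rfl
    intro p hp
    rw [if_neg (Finset.mem_filter.mp hp).2]
end

section
/- For squarefree q > 1, V_2(q;h) := ∑_{d|q, d>1} μ(d)²/φ(d)² ∑_{a: 1≤a≤d, gcd(a,d)=1} |E(a/d)|² satisfies V_2(q;h) = O(h · q/φ(q)), where E(α) = ∑_{m=1}^h e(mα). -/
open Finset Complex


lemma ortho (d : ℕ) (hd : 0 < d) (k : ℤ) :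
    ∑ a ∈ range d, Complex.exp (2 * Real.pi * I * k * a / d) =
      if (d:ℤ) ∣ k then (d:ℂ) else 0 := by
  have hd0 : (d:ℂ) ≠ 0 := Nat.cast_ne_zero.mpr hd.ne'
  have h2 : (2 * (Real.pi:ℂ) * I) ≠ 0 := by
    simp [Real.pi_ne_zero, Complex.I_ne_zero, Complex.ofReal_ne_zero]
  have hterm : ∀ a ∈ range d, Complex.exp (2 * Real.pi * I * k * a / d) =
      (Complex.exp (2 * Real.pi * I * k / d)) ^ a := by
    intro a _
    rw [← Complex.exp_nat_mul]
    ring_nf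
  rw [Finset.sum_congr rfl hterm]
  by_cases hdvd : (d:ℤ) ∣ k
  · obtain ⟨n, hkn⟩ := hdvd
    have harg : (2 * Real.pi * I * k / d : ℂ) = (n:ℤ) * (2 * Real.pi * I) := by
      have : (k:ℂ) = (d:ℂ) * (n:ℂ) := by exact_mod_cast congrArg (fun z : ℤ => (z:ℂ)) hkn
      field_simp [this]; exact this
    rw [harg, Complex.exp_int_mul_two_pi_mul_I, if_pos ⟨n, hkn⟩]
    simp
  · have hζ1 : Complex.exp (2 * Real.pi * I * k / d) ≠ 1 := by
      simp only [Ne, Complex.exp_eq_one_iff]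
      rintro ⟨n, hn⟩
      apply hdvd
      have hn' : 2 * (Real.pi:ℂ) * I * (k:ℂ) = 2 * (Real.pi:ℂ) * I * ((n:ℂ) * d) := by
        field_simp at hn
        linear_combination (2 * (Real.pi:ℂ) * I) * hn
      have : (k:ℂ) = (n:ℂ) * d := mul_left_cancel₀ h2 hn'
      exact ⟨n, by exact_mod_cast this.trans (mul_comm _ _)⟩
    rw [geom_sum_eq hζ1]
    have hζd : Complex.exp (2 * Real.pi * I * k / d) ^ d = 1 := by
      rw [← Complex.exp_nat_mul]
      rw [show (d:ℂ) * (2 * Real.pi * I * k / d) = (k:ℤ) * (2 * Real.pi * I) by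
        push_cast; field_simp]
      exact Complex.exp_int_mul_two_pi_mul_I k
    simp [hζd, hdvd]

lemma count_bound (d h m : ℕ) (hd : 0 < d) :
    (Finset.Icc 1 h |>.filter (fun n : ℕ => (d:ℤ) ∣ (m:ℤ) - (n:ℤ))).card ≤ h / d + 1 := by
  classical
  have : ((Finset.Icc 1 h).filter (fun n : ℕ => (d:ℤ) ∣ (m:ℤ) - (n:ℤ))).card ≤
      (Finset.range (h / d + 1)).card := by
    apply Finset.card_le_card_of_injOn (fun n => n / d)
    · intro n hn
      simp only [mem_coe, mem_filter, mem_Icc] at hn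
      simp only [mem_coe, mem_range, Nat.lt_succ_iff]
      exact Nat.div_le_div_right hn.1.2
    · intro n₁ h₁ n₂ h₂ heq
      simp only [Finset.coe_filter, Set.mem_setOf_eq, mem_Icc] at h₁ h₂
      have heq' : d * (n₁ / d) = d * (n₂ / d) := by
        have h' : n₁ / d = n₂ / d := by simpa using heq
        rw [h']
      have hdvd : (d:ℤ) ∣ (n₂:ℤ) - (n₁:ℤ) := by
        have := dvd_sub h₁.2 h₂.2
        simpa using this
      have hmod : n₁ % d = n₂ % d := (Nat.modEq_iff_dvd.mpr hdvd : n₁ ≡ n₂ [MOD d])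
      have := Nat.div_add_mod n₁ d
      have := Nat.div_add_mod n₂ d
      omega
  simpa using this

lemma parseval (d h : ℕ) (hd : 0 < d) :
    ∑ a ∈ Finset.Ico 1 d, ‖∑ m ∈ Finset.Icc 1 h,
        Complex.exp (2 * Real.pi * I * (m:ℂ) * (a:ℂ) / d)‖ ^ 2 ≤ (h:ℝ) * d := by
  classical
  set E : ℕ → ℂ := fun a => ∑ m ∈ Finset.Icc 1 h, Complex.exp (2 * Real.pi * I * (m:ℂ) * (a:ℂ) / d) with hE
  set N : ℕ := ∑ m ∈ Finset.Icc 1 h,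
      ((Finset.Icc 1 h).filter (fun n : ℕ => (d:ℤ) ∣ (m:ℤ) - (n:ℤ))).card with hN
  have hexpand : ∀ a : ℕ, ((‖E a‖ ^ 2 : ℝ) : ℂ) =
      ∑ m ∈ Finset.Icc 1 h, ∑ n ∈ Finset.Icc 1 h,
        Complex.exp (2 * Real.pi * I * (((m:ℤ) - (n:ℤ) : ℤ):ℂ) * (a:ℂ) / d) := by
    intro a
    have h1 : ((‖E a‖ ^ 2 : ℝ) : ℂ) = E a * (starRingEnd ℂ) (E a) := by
      rw [Complex.mul_conj, Complex.normSq_eq_norm_sq]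
    rw [h1, hE, map_sum, Finset.sum_mul_sum]
    refine Finset.sum_congr rfl fun m _ => Finset.sum_congr rfl fun n _ => ?_
    rw [← Complex.exp_conj, ← Complex.exp_add]
    congr 1
    simp only [map_div₀, map_mul, Complex.conj_I, Complex.conj_ofReal, map_natCast, map_ofNat]
    push_cast
    ring
  have hcomplex : ∑ a ∈ range d, ((‖E a‖ ^ 2 : ℝ) : ℂ) = (d:ℂ) * (N:ℂ) := by
    have hm : ∀ m ∈ Finset.Icc 1 h, (∑ a ∈ range d, ∑ n ∈ Finset.Icc 1 h,
        Complex.exp (2 * Real.pi * I * (((m:ℤ) - (n:ℤ) : ℤ):ℂ) * (a:ℂ) / d))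
        = (d:ℂ) * (((Finset.Icc 1 h).filter (fun n : ℕ => (d:ℤ) ∣ (m:ℤ) - (n:ℤ))).card : ℂ) := by
      intro m _
      rw [Finset.sum_comm]
      calc ∑ n ∈ Finset.Icc 1 h, ∑ a ∈ range d,
            Complex.exp (2 * Real.pi * I * (((m:ℤ) - (n:ℤ) : ℤ):ℂ) * (a:ℂ) / d)
          = ∑ n ∈ Finset.Icc 1 h, (if (d:ℤ) ∣ (m:ℤ) - (n:ℤ) then (d:ℂ) else 0) :=
            Finset.sum_congr rfl fun n _ => ortho d hd ((m:ℤ) - (n:ℤ))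
        _ = (d:ℂ) * (((Finset.Icc 1 h).filter (fun n : ℕ => (d:ℤ) ∣ (m:ℤ) - (n:ℤ))).card : ℂ) := by
            rw [Finset.sum_ite, Finset.sum_const, Finset.sum_const_zero, add_zero,
              nsmul_eq_mul, mul_comm]
    calc ∑ a ∈ range d, ((‖E a‖ ^ 2 : ℝ) : ℂ)
        = ∑ a ∈ range d, ∑ m ∈ Finset.Icc 1 h, ∑ n ∈ Finset.Icc 1 h,
            Complex.exp (2 * Real.pi * I * (((m:ℤ) - (n:ℤ) : ℤ):ℂ) * (a:ℂ) / d) :=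
          Finset.sum_congr rfl fun a _ => hexpand a
      _ = ∑ m ∈ Finset.Icc 1 h, ∑ a ∈ range d, ∑ n ∈ Finset.Icc 1 h,
            Complex.exp (2 * Real.pi * I * (((m:ℤ) - (n:ℤ) : ℤ):ℂ) * (a:ℂ) / d) :=
          Finset.sum_comm
      _ = ∑ m ∈ Finset.Icc 1 h,
            (d:ℂ) * (((Finset.Icc 1 h).filter (fun n : ℕ => (d:ℤ) ∣ (m:ℤ) - (n:ℤ))).card : ℂ) :=
          Finset.sum_congr rfl hm
      _ = (d:ℂ) * (N:ℂ) := by rw [← Finset.mul_sum, hN]; push_cast; ring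
  have htotal : ∑ a ∈ range d, ‖E a‖ ^ 2 = (d : ℝ) * N := by
    have := hcomplex
    rw [← Complex.ofReal_sum] at this
    have h2 : ((∑ a ∈ range d, ‖E a‖ ^ 2 : ℝ) : ℂ) = (((d:ℝ) * (N:ℝ) : ℝ) : ℂ) := by
      rw [this]; push_cast; ring
    exact_mod_cast h2
  -- counting bound : N ≤ h * (h / d + 1)
  have hNb : N ≤ h * (h / d + 1) := by
    rw [hN]
    calc ∑ m ∈ Finset.Icc 1 h, ((Finset.Icc 1 h).filter (fun n : ℕ => (d:ℤ) ∣ (m:ℤ) - (n:ℤ))).card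
        ≤ ∑ _m ∈ Finset.Icc 1 h, (h / d + 1) :=
          Finset.sum_le_sum (fun m _ => count_bound d h m hd)
      _ = h * (h / d + 1) := by rw [Finset.sum_const, Nat.card_Icc]; simp [mul_comm]
  have hdN : d * N ≤ h * h + h * d := by
    calc d * N ≤ d * (h * (h / d + 1)) := Nat.mul_le_mul_left d hNb
      _ = h * (d * (h / d) + d) := by ring
      _ ≤ h * (h + d) := Nat.mul_le_mul_left h (by
          have := Nat.mul_div_le h d
          omega)
      _ = h * h + h * d := by ring
  -- split off a = 0
  have hsplit : range d = insert 0 (Finset.Ico 1 d) := by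
    ext x; simp [mem_range, mem_Ico]; omega
  have hzero : ‖E 0‖ ^ 2 = (h:ℝ) * h := by
    have : E 0 = (h:ℂ) := by
      rw [hE]
      simp
    rw [this]
    simp [sq]
  have h0 : (0:ℕ) ∉ Finset.Ico 1 d := by simp
  have : ‖E 0‖ ^ 2 + ∑ a ∈ Finset.Ico 1 d, ‖E a‖ ^ 2 = (d:ℝ) * N := by
    rw [hsplit, Finset.sum_insert h0] at htotal
    exact htotal
  have hfin : ∑ a ∈ Finset.Ico 1 d, ‖E a‖ ^ 2 ≤ (h:ℝ) * d := by
    have hcast : (d:ℝ) * N ≤ (h:ℝ) * h + (h:ℝ) * d := by exact_mod_cast hdN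
    rw [hzero] at this
    linarith
  exact hfin


lemma divisors_split (p m : ℕ) (hp : p.Prime) (hpm : ¬ p ∣ m) (hm : m ≠ 0) (f : ℕ → ℝ) :
    ∑ d ∈ (p * m).divisors, f d = ∑ d ∈ m.divisors, f d + ∑ d ∈ m.divisors, f (p * d) := by
  classical
  have hset : (p * m).divisors = m.divisors ∪ m.divisors.image (fun d => p * d) := by
    ext d
    simp only [Nat.mem_divisors, mem_union, mem_image]
    constructor
    · rintro ⟨hdvd, hne⟩
      by_cases hpd : p ∣ d
      · obtain ⟨e, rfl⟩ := hpd
        right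
        exact ⟨e, ⟨(Nat.mul_dvd_mul_iff_left hp.pos).mp hdvd, hm⟩, rfl⟩
      · left
        have hcop : Nat.Coprime p d := (Nat.Prime.coprime_iff_not_dvd hp).mpr hpd
        exact ⟨(Nat.Coprime.dvd_of_dvd_mul_left hcop.symm hdvd), hm⟩
    · rintro (⟨hdvd, _⟩ | ⟨e, ⟨he, _⟩, rfl⟩)
      · exact ⟨hdvd.mul_left p, mul_ne_zero hp.ne_zero hm⟩
      · exact ⟨Nat.mul_dvd_mul_left p he, mul_ne_zero hp.ne_zero hm⟩
  have hdisj : Disjoint m.divisors (m.divisors.image (fun d => p * d)) := by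
    rw [Finset.disjoint_right]
    rintro d hd hd'
    simp only [mem_image] at hd
    obtain ⟨e, _, rfl⟩ := hd
    exact hpm ((dvd_mul_right p e).trans (Nat.mem_divisors.mp hd').1)
  rw [hset, Finset.sum_union hdisj, Finset.sum_image]
  intro a _ b _ hab
  exact Nat.eq_of_mul_eq_mul_left hp.pos hab

lemma divsum (q : ℕ) (hsq : Squarefree q) : ∀ k : ℕ, 2 ≤ k →
    (∀ p : ℕ, p.Prime → p ∣ q → k ≤ p) →
    ∑ d ∈ q.divisors, (d:ℝ) / (Nat.totient d : ℝ)^2 ≤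
      (1 + 2/((k:ℝ)-1)) * ((q:ℝ) / (Nat.totient q : ℝ)) := by
  induction q using Nat.strong_induction_on with
  | _ q ih =>
  intro k hk hkp
  have hK1 : (1:ℝ) ≤ (k:ℝ) - 1 := by
    have : (2:ℝ) ≤ (k:ℝ) := by exact_mod_cast hk
    linarith
  rcases eq_or_ne q 1 with rfl | hq1
  · simp [Nat.divisors_one]
    positivity
  have hq0 : q ≠ 0 := hsq.ne_zero
  -- q ≥ 2
  set p := q.minFac with hpdef
  have hp : p.Prime := Nat.minFac_prime hq1
  have hpq : p ∣ q := Nat.minFac_dvd q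
  set m := q / p with hmdef
  have hqm : q = p * m := (Nat.mul_div_cancel' hpq).symm
  have hm0 : m ≠ 0 := by
    intro h; rw [h, mul_zero] at hqm; exact hq0 hqm
  have hpm : ¬ p ∣ m := by
    intro ⟨e, he⟩
    have : p * p ∣ q := by rw [hqm, he]; exact ⟨e, by ring⟩
    exact hp.one_lt.ne' (Nat.isUnit_iff.mp (hsq p this))
  have hmlt : m < q := by
    rw [hmdef]
    exact Nat.div_lt_self (Nat.pos_of_ne_zero hq0) hp.one_lt
  have hmsq : Squarefree m := hsq.squarefree_of_dvd ⟨p, by rw [hqm]; ring⟩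
  have hmprimes : ∀ r : ℕ, r.Prime → r ∣ m → p + 1 ≤ r := by
    intro r hr hrm
    have hrq : r ∣ q := hrm.trans ⟨p, by rw [hqm]; ring⟩
    have h1 : p ≤ r := Nat.minFac_le_of_dvd hr.two_le hrq
    have h2 : r ≠ p := by rintro rfl; exact hpm hrm
    omega
  have IH := ih m hmlt hmsq (p + 1) (by have := hp.two_le; omega) hmprimes
  have hkP : k ≤ p := hkp p hp hpq
  -- real abbreviations
  set P : ℝ := (p : ℝ) with hPdef
  have hP2 : (2:ℝ) ≤ P := by rw [hPdef]; exact_mod_cast hp.two_le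
  have hP1 : (0:ℝ) < P - 1 := by linarith
  have hφm : (0:ℝ) < (Nat.totient m : ℝ) := by
    exact_mod_cast Nat.totient_pos.mpr (Nat.pos_of_ne_zero hm0)
  have hcopm : Nat.Coprime p m := (Nat.Prime.coprime_iff_not_dvd hp).mpr hpm
  have hφq : ((Nat.totient q : ℕ) : ℝ) = (P - 1) * (Nat.totient m : ℝ) := by
    rw [hqm, Nat.totient_mul hcopm, Nat.totient_prime hp]
    push_cast [Nat.cast_sub hp.one_le]
    ring
  set S : ℝ := ∑ d ∈ m.divisors, (d:ℝ) / (Nat.totient d : ℝ)^2 with hSdef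
  have hS0 : 0 ≤ S := Finset.sum_nonneg fun d _ => by positivity
  have hsplit : ∑ d ∈ q.divisors, (d:ℝ) / (Nat.totient d : ℝ)^2
      = S + (P/(P-1)^2) * S := by
    rw [hqm, divisors_split p m hp hpm hm0]
    congr 1
    rw [hSdef, Finset.mul_sum]
    refine Finset.sum_congr rfl fun d hd => ?_
    have hdm : d ∣ m := (Nat.mem_divisors.mp hd).1
    have hd0 : d ≠ 0 := by rintro rfl; exact hm0 (Nat.eq_zero_of_zero_dvd hdm)
    have hφd : (0:ℝ) < (Nat.totient d : ℝ) := by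
      exact_mod_cast Nat.totient_pos.mpr (Nat.pos_of_ne_zero hd0)
    have hpd : ¬ p ∣ d := fun h => hpm (h.trans hdm)
    have hφpd : ((Nat.totient (p * d) : ℕ) : ℝ) = (P - 1) * (Nat.totient d : ℝ) := by
      rw [Nat.totient_mul ((Nat.Prime.coprime_iff_not_dvd hp).mpr hpd), Nat.totient_prime hp]
      push_cast [Nat.cast_sub hp.one_le]
      ring
    rw [hφpd]
    push_cast
    field_simp
    ring
  -- key elementary inequality
  have key : (1 + P/(P-1)^2) * (1 + 2/P) ≤ (1 + 2/(P-1)) * (P/(P-1)) := by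
    have hPpos : (0:ℝ) < P := by linarith
    have e1 : (1 + P/(P-1)^2) * (1 + 2/P) = ((P-1)^2 + P) * (P + 2) / ((P-1)^2 * P) := by
      field_simp
    have e2 : (1 + 2/(P-1)) * (P/(P-1)) = (P + 1) * P / ((P-1)^2) := by
      field_simp
      ring
    rw [e1, e2, div_le_div_iff₀ (by positivity) (by positivity)]
    nlinarith [sq_nonneg (P - 1), hP2, hP1]
  have hmono : (1 + 2/(P-1)) ≤ (1 + 2/((k:ℝ)-1)) := by
    have hkP' : (k:ℝ) ≤ P := by rw [hPdef]; exact_mod_cast hkP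
    have : 2/(P-1) ≤ 2/((k:ℝ)-1) := by
      apply div_le_div_of_nonneg_left (by norm_num) (by linarith) (by linarith)
    linarith
  -- IH in convenient form
  have hcast : ((p + 1 : ℕ) : ℝ) - 1 = P := by push_cast [hPdef]; ring
  rw [hcast] at IH
  set M : ℝ := (m:ℝ) / (Nat.totient m : ℝ) with hMdef
  have hM0 : 0 ≤ M := by positivity
  have hqφ : (q:ℝ) / (Nat.totient q : ℝ) = (P/(P-1)) * M := by
    rw [hφq, hqm, hMdef]
    push_cast
    field_simp
    exact hPdef.symm
  rw [hsplit, hqφ]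
  calc S + (P/(P-1)^2) * S = (1 + P/(P-1)^2) * S := by ring
    _ ≤ (1 + P/(P-1)^2) * ((1 + 2/P) * M) := by
        apply mul_le_mul_of_nonneg_left IH (by positivity)
    _ = ((1 + P/(P-1)^2) * (1 + 2/P)) * M := by ring
    _ ≤ ((1 + 2/(P-1)) * (P/(P-1))) * M := mul_le_mul_of_nonneg_right key hM0
    _ ≤ ((1 + 2/((k:ℝ)-1)) * (P/(P-1))) * M :=
        mul_le_mul_of_nonneg_right (mul_le_mul_of_nonneg_right hmono (by positivity)) hM0
    _ = (1 + 2/((k:ℝ)-1)) * ((P/(P-1)) * M) := by ring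


/-- `V₂(q;h) ≪ h q/φ(q)` where
`V₂(q;h) = ∑_{d∣q, d>1} μ(d)²/φ(d)² ∑_{(a,d)=1} |E(a/d)|²`. -/
theorem stmt_13 :
    ∃ C : ℝ, ∀ q h : ℕ, Squarefree q → 1 < q → 0 < h →
      ∑ d ∈ q.divisors.filter (fun d => 1 < d),
        (((ArithmeticFunction.moebius d : ℤ) : ℝ) ^ 2 / (Nat.totient d : ℝ) ^ 2) *
          ∑ a ∈ (Finset.Icc 1 d).filter (fun a => Nat.gcd a d = 1),
            ‖∑ m ∈ Finset.Icc 1 h,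
              Complex.exp (2 * Real.pi * Complex.I * (m : ℂ) * (a : ℂ) / (d : ℂ))‖ ^ 2 ≤
      C * (h : ℝ) * (q : ℝ) / (Nat.totient q : ℝ) := by
  refine ⟨3, fun q h hsq hq hh => ?_⟩
  have hq0 : q ≠ 0 := by omega
  have hφq : (0:ℝ) < (Nat.totient q : ℝ) := by
    exact_mod_cast Nat.totient_pos.mpr (by omega)
  have step1 : ∀ d ∈ q.divisors.filter (fun d => 1 < d),
      (((ArithmeticFunction.moebius d : ℤ) : ℝ) ^ 2 / (Nat.totient d : ℝ) ^ 2) *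
          ∑ a ∈ (Finset.Icc 1 d).filter (fun a => Nat.gcd a d = 1),
            ‖∑ m ∈ Finset.Icc 1 h,
              Complex.exp (2 * Real.pi * Complex.I * (m : ℂ) * (a : ℂ) / (d : ℂ))‖ ^ 2 ≤
        (h:ℝ) * d / (Nat.totient d : ℝ) ^ 2 := by
    intro d hd
    simp only [mem_filter, Nat.mem_divisors] at hd
    obtain ⟨⟨hdq, _⟩, hd1⟩ := hd
    have hdsq : Squarefree d := hsq.squarefree_of_dvd hdq
    have hμ : (((ArithmeticFunction.moebius d : ℤ) : ℝ)) ^ 2 = 1 := by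
      have := ArithmeticFunction.moebius_sq (n := d)
      rw [if_pos hdsq] at this
      have : ((ArithmeticFunction.moebius d ^ 2 : ℤ) : ℝ) = ((1:ℤ):ℝ) := by rw [this]
      push_cast at this
      linarith [this]
    have hφd : (0:ℝ) < (Nat.totient d : ℝ) := by
      exact_mod_cast Nat.totient_pos.mpr (by omega)
    have hsub : (Finset.Icc 1 d).filter (fun a => Nat.gcd a d = 1) ⊆ Finset.Ico 1 d := by
      intro a ha
      simp only [mem_filter, mem_Icc] at ha
      simp only [mem_Ico]
      refine ⟨ha.1.1, lt_of_le_of_ne ha.1.2 ?_⟩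
      rintro rfl
      rw [Nat.gcd_self] at ha
      omega
    have hinner : ∑ a ∈ (Finset.Icc 1 d).filter (fun a => Nat.gcd a d = 1),
        ‖∑ m ∈ Finset.Icc 1 h,
          Complex.exp (2 * Real.pi * Complex.I * (m : ℂ) * (a : ℂ) / (d : ℂ))‖ ^ 2
        ≤ (h:ℝ) * d := by
      refine le_trans (Finset.sum_le_sum_of_subset_of_nonneg hsub
        (fun a _ _ => by positivity)) ?_
      exact parseval d h (by omega)
    rw [hμ]
    rw [one_div, inv_mul_eq_div, div_le_div_iff₀ (by positivity) (by positivity)]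
    calc (∑ a ∈ (Finset.Icc 1 d).filter (fun a => Nat.gcd a d = 1),
          ‖∑ m ∈ Finset.Icc 1 h,
            Complex.exp (2 * Real.pi * Complex.I * (m : ℂ) * (a : ℂ) / (d : ℂ))‖ ^ 2)
            * (Nat.totient d : ℝ) ^ 2
        ≤ ((h:ℝ) * d) * (Nat.totient d : ℝ) ^ 2 := by
          apply mul_le_mul_of_nonneg_right hinner (by positivity)
      _ = (h:ℝ) * d * (Nat.totient d : ℝ) ^ 2 := rfl
  have step2 := Finset.sum_le_sum step1
  refine le_trans step2 ?_
  have step3 : ∑ d ∈ q.divisors.filter (fun d => 1 < d), (h:ℝ) * d / (Nat.totient d : ℝ) ^ 2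
      ≤ ∑ d ∈ q.divisors, (h:ℝ) * d / (Nat.totient d : ℝ) ^ 2 := by
    apply Finset.sum_le_sum_of_subset_of_nonneg (Finset.filter_subset _ _)
    intro d _ _
    positivity
  refine le_trans step3 ?_
  have step4 : ∑ d ∈ q.divisors, (h:ℝ) * d / (Nat.totient d : ℝ) ^ 2
      = (h:ℝ) * ∑ d ∈ q.divisors, (d:ℝ) / (Nat.totient d : ℝ) ^ 2 := by
    rw [Finset.mul_sum]
    exact Finset.sum_congr rfl fun d _ => by ring
  rw [step4]
  have step5 := divsum q hsq 2 le_rfl (fun p hp _ => hp.two_le)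
  have h3 : (1 + 2/(((2:ℕ):ℝ)-1)) = 3 := by norm_num
  rw [h3] at step5
  calc (h:ℝ) * ∑ d ∈ q.divisors, (d:ℝ) / (Nat.totient d : ℝ) ^ 2
      ≤ (h:ℝ) * (3 * ((q:ℝ) / (Nat.totient q : ℝ))) :=
        mul_le_mul_of_nonneg_left step5 (by positivity)
    _ = 3 * (h:ℝ) * (q:ℝ) / (Nat.totient q : ℝ) := by ring
end
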